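/- If I and J are monomial ideals in K[x_1,...,x_n], then their join I*J is a monomial ideal. -/

import Mathlib

open MvPolynomial

/-- The join `I * J` of two ideals in `K[x_1,...,x_n]`: the elimination ideal
`(I(y) + J(z) + ⟨y_i + z_i - x_i⟩) ∩ K[x]`, realized in the polynomial ring on
`Fin n ⊕ (Fin n ⊕ Fin n)` where `Sum.inl` are the `x`-variables, `Sum.inr ∘ Sum.inl`
the `y`-variables and `Sum.inr ∘ Sum.inr` the `z`-variables. -/
noncomputable def joinIdeal {K : Type*} [Field K] {n : ℕ}
    (I J : Ideal (MvPolynomial (Fin n) K)) : Ideal (MvPolynomial (Fin n) K) :=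
  Ideal.comap (rename (Sum.inl : Fin n → Fin n ⊕ (Fin n ⊕ Fin n)))
    (Ideal.map (rename (fun i : Fin n => (Sum.inr (Sum.inl i) : Fin n ⊕ (Fin n ⊕ Fin n)))) I ⊔
     Ideal.map (rename (fun i : Fin n => (Sum.inr (Sum.inr i) : Fin n ⊕ (Fin n ⊕ Fin n)))) J ⊔
     Ideal.span {p : MvPolynomial (Fin n ⊕ (Fin n ⊕ Fin n)) K | ∃ i : Fin n,
       p = X (Sum.inr (Sum.inl i)) + X (Sum.inr (Sum.inr i)) - X (Sum.inl i)})

/-- The `r`-th secant ideal `I^{r}`, the `r`-fold join of `I` with itself.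
(The `0`-th secant is the irrelevant maximal ideal `⟨x_1,...,x_n⟩`, the identity for join.) -/
noncomputable def secantIdeal {K : Type*} [Field K] {n : ℕ}
    (I : Ideal (MvPolynomial (Fin n) K)) : ℕ → Ideal (MvPolynomial (Fin n) K)
  | 0 => Ideal.span (Set.range X)
  | 1 => I
  | (r + 2) => joinIdeal (secantIdeal I (r + 1)) I

/-- An ideal of `K[x_1,...,x_n]` is a monomial ideal if it is generated by monomials. -/
def IsMonomialIdeal {K : Type*} [Field K] {n : ℕ} (I : Ideal (MvPolynomial (Fin n) K)) : Prop :=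
  ∃ S : Set (Fin n →₀ ℕ), I = Ideal.span ((fun m => monomial m (1 : K)) '' S)

namespace StmtAux

variable {K : Type*} [Field K] {n : ℕ}

noncomputable def wt (n : ℕ) : (Fin n ⊕ (Fin n ⊕ Fin n)) → (Fin n →₀ ℕ) :=
  Sum.elim (fun i => Finsupp.single i 1)
    (Sum.elim (fun i => Finsupp.single i 1) (fun i => Finsupp.single i 1))

@[simp] lemma wt_inl (i : Fin n) : wt n (Sum.inl i) = Finsupp.single i 1 := rfl
@[simp] lemma wt_inr_inl (i : Fin n) : wt n (Sum.inr (Sum.inl i)) = Finsupp.single i 1 := rfl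
@[simp] lemma wt_inr_inr (i : Fin n) : wt n (Sum.inr (Sum.inr i)) = Finsupp.single i 1 := rfl

lemma weight_single (t : Fin n ⊕ (Fin n ⊕ Fin n)) (c : ℕ) :
    Finsupp.weight (wt n) (Finsupp.single t c) = c • wt n t := by
  rw [Finsupp.weight_apply, Finsupp.sum_single_index]
  simp

lemma weight_mapDomain (g : Fin n → Fin n ⊕ (Fin n ⊕ Fin n))
    (hg : ∀ i, wt n (g i) = Finsupp.single i 1) (a : Fin n →₀ ℕ) :
    Finsupp.weight (wt n) (a.mapDomain g) = a := by
  induction a using Finsupp.induction with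
  | zero => simp
  | single_add i c a hia hc ih =>
    rw [Finsupp.mapDomain_add, map_add, ih, Finsupp.mapDomain_single, weight_single, hg,
      Finsupp.smul_single, smul_eq_mul, mul_one]

lemma whc_rename (f : MvPolynomial (Fin n) K) (d : Fin n →₀ ℕ) :
    weightedHomogeneousComponent (wt n) d
        (rename (Sum.inl : Fin n → Fin n ⊕ (Fin n ⊕ Fin n)) f)
      = rename Sum.inl (monomial d (coeff d f)) := by
  have hinl : ∀ i : Fin n, wt n (Sum.inl i) = Finsupp.single i 1 := fun _ => rfl
  ext m
  rw [coeff_weightedHomogeneousComponent, rename_monomial, coeff_monomial]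
  by_cases hm : Finsupp.mapDomain Sum.inl d = m
  · subst hm
    rw [if_pos (weight_mapDomain _ hinl d), if_pos rfl,
      coeff_rename_mapDomain _ Sum.inl_injective]
  · rw [if_neg hm]
    by_cases hw : Finsupp.weight (wt n) m = d
    · rw [if_pos hw]
      by_contra h
      obtain ⟨u, hu, _⟩ := coeff_rename_ne_zero _ _ _ h
      apply hm
      rw [← hu] at hw ⊢
      rw [weight_mapDomain _ hinl u] at hw
      rw [hw]
    · rw [if_neg hw]

/-- An ideal closed under taking monomial parts is a monomial ideal. -/
lemma isMonomialIdeal_of_components (P : Ideal (MvPolynomial (Fin n) K))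
    (h : ∀ f ∈ P, ∀ d, monomial d (coeff d f) ∈ P) : IsMonomialIdeal P := by
  refine ⟨{d | monomial d (1 : K) ∈ P}, le_antisymm ?_ ?_⟩
  · intro f hf
    rw [f.as_sum]
    refine Submodule.sum_mem _ fun d hd => ?_
    have hc : coeff d f ≠ 0 := mem_support_iff.mp hd
    have h1 : monomial d (1 : K) ∈ P := by
      have := P.mul_mem_left (C (coeff d f)⁻¹) (h f hf d)
      rwa [C_mul_monomial, inv_mul_cancel₀ hc] at this
    have : monomial d (coeff d f) = C (coeff d f) * monomial d 1 := by
      rw [C_mul_monomial, mul_one]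
    rw [this]
    exact Ideal.mul_mem_left _ _ (Ideal.subset_span ⟨d, h1, rfl⟩)
  · rw [Ideal.span_le]
    rintro _ ⟨d, hd, rfl⟩
    exact hd

end StmtAux

open StmtAux in
theorem stmt_3 (K : Type*) [Field K] (n : ℕ) (I J : Ideal (MvPolynomial (Fin n) K))
    (hI : IsMonomialIdeal I) (hJ : IsMonomialIdeal J) :
    IsMonomialIdeal (joinIdeal I J) := by
  classical
  obtain ⟨S₁, rfl⟩ := hI
  obtain ⟨S₂, rfl⟩ := hJ
  set 𝒜 := weightedHomogeneousSubmodule K (wt n) with h𝒜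
  letI : GradedAlgebra 𝒜 := weightedGradedAlgebra K (wt n)
  set L := (Ideal.map (rename (fun i : Fin n => (Sum.inr (Sum.inl i) : Fin n ⊕ (Fin n ⊕ Fin n))))
      (Ideal.span ((fun m => monomial m (1 : K)) '' S₁)) ⊔
     Ideal.map (rename (fun i : Fin n => (Sum.inr (Sum.inr i) : Fin n ⊕ (Fin n ⊕ Fin n))))
      (Ideal.span ((fun m => monomial m (1 : K)) '' S₂)) ⊔
     Ideal.span {p : MvPolynomial (Fin n ⊕ (Fin n ⊕ Fin n)) K | ∃ i : Fin n,
       p = X (Sum.inr (Sum.inl i)) + X (Sum.inr (Sum.inr i)) - X (Sum.inl i)}) with hLdef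
  have hL : L.IsHomogeneous 𝒜 := by
    rw [hLdef, Ideal.map_span, Ideal.map_span, ← Ideal.span_union, ← Ideal.span_union]
    apply Ideal.homogeneous_span
    rintro x ((⟨_, ⟨a, _, rfl⟩, rfl⟩ | ⟨_, ⟨a, _, rfl⟩, rfl⟩) | ⟨i, rfl⟩)
    · refine ⟨a, ?_⟩
      rw [h𝒜, mem_weightedHomogeneousSubmodule, rename_monomial]
      exact isWeightedHomogeneous_monomial _ _ _ (weight_mapDomain _ (fun i => wt_inr_inl i) a)
    · refine ⟨a, ?_⟩
      rw [h𝒜, mem_weightedHomogeneousSubmodule, rename_monomial]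
      exact isWeightedHomogeneous_monomial _ _ _ (weight_mapDomain _ (fun i => wt_inr_inr i) a)
    · refine ⟨Finsupp.single i 1, Submodule.sub_mem _ (Submodule.add_mem _ ?_ ?_) ?_⟩ <;>
      · rw [h𝒜, mem_weightedHomogeneousSubmodule]
        exact isWeightedHomogeneous_X (R := K) (wt n) _
  have key : ∀ f ∈ joinIdeal (Ideal.span ((fun m => monomial m (1 : K)) '' S₁))
      (Ideal.span ((fun m => monomial m (1 : K)) '' S₂)), ∀ d,
      monomial d (coeff d f) ∈ joinIdeal (Ideal.span ((fun m => monomial m (1 : K)) '' S₁))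
      (Ideal.span ((fun m => monomial m (1 : K)) '' S₂)) := by
    intro f hf d
    have hmem : rename (Sum.inl : Fin n → Fin n ⊕ (Fin n ⊕ Fin n)) f ∈ L := hf
    have h2 := hL d hmem
    have h3 : (DirectSum.decompose 𝒜 (rename (Sum.inl : Fin n → Fin n ⊕ (Fin n ⊕ Fin n)) f) d
        : MvPolynomial (Fin n ⊕ (Fin n ⊕ Fin n)) K)
        = weightedHomogeneousComponent (wt n) d (rename Sum.inl f) :=
      MvPolynomial.decompose'_apply K (wt n) _ d
    rw [h3, whc_rename] at h2
    exact h2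
  exact isMonomialIdeal_of_components _ key
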